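/- Let ν be a positive C¹ density on ℝ^d that has a (λ, h, B(x₀,R), C)-Lyapunov function of the specific form V(x) = γ‖x−x₀‖² + 1 with γ > 0. Then sup_{x∈B(x₀,R)} u_{B(x₀,R)}(x)/ν(x) ≤ a, where a = (C/V_d) · exp(λR²/4) · (4π/(λR²))^{d/2} and V_d is the volume of the d-dimensional unit ball. -/

import Mathlib

open MeasureTheory RealInnerProductSpace

noncomputable section

abbrev Euc (d : ℕ) := EuclideanSpace ℝ (Fin d)

def IsDensity {d : ℕ} (ρ : Euc d → ℝ) : Prop :=
  (∀ x, 0 ≤ ρ x) ∧ ∫ x, ρ x = 1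

def lap {d : ℕ} (f : Euc d → ℝ) (x : Euc d) : ℝ :=
  ∑ i : Fin d, fderiv ℝ (fun y => fderiv ℝ f y (EuclideanSpace.single i 1)) x (EuclideanSpace.single i 1)

def LGen {d : ℕ} (ν V : Euc d → ℝ) (x : Euc d) : ℝ :=
  ⟪gradient V x, gradient (fun y => Real.log (ν y)) x⟫ + lap V x

structure IsLyapunov {d : ℕ} (ν V : Euc d → ℝ) (lam h : ℝ) (B : Set (Euc d)) (C : ℝ) : Prop where
  contDiff : ContDiff ℝ 2 V
  one_le : ∀ x, 1 ≤ V x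
  lam_pos : 0 < lam
  h_pos : 0 < h
  C_pos : 0 < C
  bounded : Bornology.IsBounded B
  drift : ∀ x, LGen ν V x ≤ -lam * V x + h * B.indicator 1 x
  ratio : ∀ x ∈ B, ∀ y ∈ B, ν x ≤ C * ν y

def uball {d : ℕ} (x₀ : Euc d) (R : ℝ) (x : Euc d) : ℝ :=
  (Metric.closedBall x₀ R).indicator (fun _ => ((volume (Metric.closedBall x₀ R)).toReal)⁻¹) x

def IsLyDensity {d : ℕ} (ν : Euc d → ℝ) (x₀ : Euc d) (R q a : ℝ) : Prop :=
  ∃ V lam h C, IsLyapunov ν V lam h (Metric.closedBall x₀ R) C ∧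
    (1 + h * R ^ 2 * C ^ 2) / lam ≤ q ∧
    ∀ x ∈ Metric.closedBall x₀ R, uball x₀ R x ≤ a * ν x

def Vball (d : ℕ) : ℝ := (volume (Metric.closedBall (0 : Euc d) 1)).toReal

def IsLogConcave {d : ℕ} (ν : Euc d → ℝ) (c L : ℝ) : Prop :=
  ContDiff ℝ 2 (fun x => -Real.log (ν x)) ∧
  (∀ x y : Euc d, c * ‖x - y‖ ^ 2 ≤
      ⟪gradient (fun z => -Real.log (ν z)) x - gradient (fun z => -Real.log (ν z)) y, x - y⟫) ∧
  (∀ x : Euc d, ‖fderiv ℝ (fun z => gradient (fun w => -Real.log (ν w)) z) x‖ ≤ L)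

def GammaR {d : ℕ} (π πy : Euc d → ℝ) (τ ρ : ℝ) (f : Euc d × Euc d → ℝ) (x y : Euc d) : ℝ :=
  ‖gradient (fun x' => f (x', y)) x‖ ^ 2 + τ * ‖gradient (fun y' => f (x, y')) y‖ ^ 2 +
    (ρ / 2) * min 1 (π y * πy x / (π x * πy y)) * (f (y, x) - f (x, y)) ^ 2


section QuadLyapAux

variable {d : ℕ}

lemma hasFDerivAt_quad (γ : ℝ) (x₀ x : Euc d) :
    HasFDerivAt (fun y : Euc d => γ * ‖y - x₀‖ ^ 2 + 1)
      ((2*γ) • (innerSL ℝ (x - x₀))) x := by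
  have h1 : HasFDerivAt (fun y : Euc d => y - x₀) (ContinuousLinearMap.id ℝ (Euc d)) x :=
    (hasFDerivAt_id x).sub_const x₀
  have h2 := (h1.inner ℝ h1).const_mul γ |>.add_const 1
  have heq : (fun y : Euc d => γ * ⟪y - x₀, y - x₀⟫ + 1) =
      (fun y : Euc d => γ * ‖y - x₀‖ ^ 2 + 1) := by
    funext y; rw [real_inner_self_eq_norm_sq]
  rw [heq] at h2
  refine h2.congr_fderiv ?_
  ext v
  simp only [ContinuousLinearMap.smul_apply, ContinuousLinearMap.coe_comp', Function.comp_apply,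
    ContinuousLinearMap.prod_apply, fderivInnerCLM_apply, innerSL_apply_apply,
    ContinuousLinearMap.coe_id', id_eq, smul_eq_mul]
  rw [real_inner_comm v (x - x₀)]
  ring

lemma toDual_smul_innerSL (c : ℝ) (z : Euc d) :
    (c • (innerSL ℝ z) : Euc d →L[ℝ] ℝ) = InnerProductSpace.toDual ℝ (Euc d) (c • z) := by
  ext v
  simp only [ContinuousLinearMap.smul_apply, innerSL_apply_apply, InnerProductSpace.toDual_apply_apply,
    real_inner_smul_left, smul_eq_mul]

lemma gradient_quad (γ : ℝ) (x₀ x : Euc d) :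
    gradient (fun y : Euc d => γ * ‖y - x₀‖ ^ 2 + 1) x = (2*γ) • (x - x₀) := by
  have h := (hasFDerivAt_quad γ x₀ x).hasGradientAt.gradient
  rw [h, toDual_smul_innerSL, LinearIsometryEquiv.symm_apply_apply]

lemma lap_quad (γ : ℝ) (x₀ x : Euc d) :
    lap (fun y : Euc d => γ * ‖y - x₀‖ ^ 2 + 1) x = 2*γ*d := by
  have hfd : ∀ y : Euc d, fderiv ℝ (fun y : Euc d => γ * ‖y - x₀‖ ^ 2 + 1) y
      = (2*γ) • (innerSL ℝ (y - x₀)) := fun y => (hasFDerivAt_quad γ x₀ y).fderiv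
  unfold lap
  have : ∀ i : Fin d, fderiv ℝ
      (fun y => fderiv ℝ (fun y : Euc d => γ * ‖y - x₀‖ ^ 2 + 1) y (EuclideanSpace.single i 1)) x
      (EuclideanSpace.single i 1) = 2*γ := by
    intro i
    have heq : (fun y => fderiv ℝ (fun y : Euc d => γ * ‖y - x₀‖ ^ 2 + 1) y
        (EuclideanSpace.single i 1)) = fun y : Euc d => (2*γ) * ⟪y - x₀, EuclideanSpace.single i (1:ℝ)⟫ := by
      funext y; rw [hfd y]; simp [inner_sub_left]
    rw [heq]
    have h1 : HasFDerivAt (fun y : Euc d => y - x₀) (ContinuousLinearMap.id ℝ (Euc d)) x :=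
      (hasFDerivAt_id x).sub_const x₀
    have h2 := (h1.inner ℝ (hasFDerivAt_const (EuclideanSpace.single i (1:ℝ)) x)).const_mul (2*γ)
    rw [h2.fderiv]
    simp only [ContinuousLinearMap.smul_apply, ContinuousLinearMap.coe_comp', Function.comp_apply,
      ContinuousLinearMap.prod_apply, fderivInnerCLM_apply, innerSL_apply_apply,
      ContinuousLinearMap.coe_id', id_eq, smul_eq_mul, ContinuousLinearMap.zero_apply,
      inner_zero_right]
    rw [real_inner_self_eq_norm_sq]
    simp [EuclideanSpace.norm_single]
  rw [Finset.sum_congr rfl (fun i _ => this i)]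
  simp [mul_comm]

lemma drift'_quad (ν : Euc d → ℝ) (hνpos : ∀ x, 0 < ν x) (hνC1 : ContDiff ℝ 1 ν)
    (x₀ : Euc d) (γ lam h R : ℝ)
    (hdrift : ∀ x, LGen ν (fun x => γ * ‖x - x₀‖ ^ 2 + 1) x ≤
      -lam * (γ * ‖x - x₀‖ ^ 2 + 1) + h * (Metric.closedBall x₀ R).indicator 1 x)
    (x : Euc d) :
    2*γ * (fderiv ℝ (fun y => Real.log (ν y)) x (x - x₀)) + 2*γ*d ≤
      -lam * (γ * ‖x - x₀‖ ^ 2 + 1) + h * (Metric.closedBall x₀ R).indicator 1 x := by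
  have hlog : Differentiable ℝ (fun y => Real.log (ν y)) :=
    (hνC1.log (fun x => (hνpos x).ne')).differentiable (by norm_num)
  have hgrad := (hlog x).hasGradientAt
  have hfd : fderiv ℝ (fun y => Real.log (ν y)) x (x - x₀)
      = ⟪gradient (fun y => Real.log (ν y)) x, x - x₀⟫ := by
    rw [hgrad.hasFDerivAt.fderiv]
    simp [InnerProductSpace.toDual_apply_apply]
  have hg := hdrift x
  rw [LGen, gradient_quad, lap_quad] at hg
  rw [real_inner_smul_left, real_inner_comm] at hg
  rw [hfd]
  linarith

lemma key_bound_quad (ν : Euc d → ℝ) (hνpos : ∀ x, 0 < ν x) (hνC1 : ContDiff ℝ 1 ν)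
    (x₀ : Euc d) (γ lam h C R : ℝ) (hγ : 0 < γ) (hR : 0 < R) (hlam : 0 < lam)
    (hdrift : ∀ x : Euc d,
      2*γ * (fderiv ℝ (fun y => Real.log (ν y)) x (x - x₀)) + 2*γ*d ≤
      -lam * (γ * ‖x - x₀‖ ^ 2 + 1) + h * (Metric.closedBall x₀ R).indicator 1 x)
    (hratio : ∀ x ∈ Metric.closedBall x₀ R, ∀ y ∈ Metric.closedBall x₀ R, ν x ≤ C * ν y)
    (x : Euc d) (hx : x ∈ Metric.closedBall x₀ R) :
    ∀ y : Euc d, ν y ≤ C * ν x * Real.exp (lam * R^2/4) * Real.exp (-(lam/4) * ‖y - x₀‖^2) := by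
  have hνxpos := hνpos x
  have hCνx : 0 ≤ C * ν x := by
    have := hratio x hx x hx
    nlinarith [hνpos x]
  have hlogC : ContDiff ℝ 1 (fun y => Real.log (ν y)) := hνC1.log (fun x => (hνpos x).ne')
  have hlog : Differentiable ℝ (fun y => Real.log (ν y)) := hlogC.differentiable (by norm_num)
  intro y
  by_cases hyr : ‖y - x₀‖ ≤ R
  · have hyB : y ∈ Metric.closedBall x₀ R := by
      rw [Metric.mem_closedBall, dist_eq_norm]; exact hyr
    have h1 : ν y ≤ C * ν x := hratio y hyB x hx
    have h2 : (1:ℝ) ≤ Real.exp (lam * R^2/4) * Real.exp (-(lam/4) * ‖y - x₀‖^2) := by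
      rw [← Real.exp_add]
      apply Real.one_le_exp
      have hsq : ‖y - x₀‖^2 ≤ R^2 := pow_le_pow_left₀ (norm_nonneg _) hyr 2
      nlinarith
    nlinarith [hνpos y]
  · push_neg at hyr
    set r : ℝ := ‖y - x₀‖ with hrdef
    have hr0 : 0 < r := hR.trans hyr
    set u : Euc d := r⁻¹ • (y - x₀) with hudef
    have hu : ‖u‖ = 1 := by
      rw [hudef, norm_smul, norm_inv, Real.norm_eq_abs, abs_of_pos hr0]
      field_simp
      exact hrdef.symm
    have hcrv : ∀ t : ℝ, ‖(x₀ + t • u) - x₀‖ = |t| := by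
      intro t; rw [add_sub_cancel_left, norm_smul, hu, Real.norm_eq_abs, mul_one]
    have hcrvr : x₀ + r • u = y := by
      rw [hudef, smul_smul, mul_inv_cancel₀ hr0.ne', one_smul]
      abel
    set L := fun z : Euc d => fderiv ℝ (fun w => Real.log (ν w)) z
    set ψ : ℝ → ℝ := fun t => Real.log (ν (x₀ + t • u)) + lam * t^2/4 + d * Real.log t with hψdef
    have hψderiv : ∀ t : ℝ, 0 < t →
        HasDerivAt ψ (L (x₀ + t • u) u + lam * t/2 + d / t) t := by
      intro t ht
      have hc : HasDerivAt (fun t : ℝ => x₀ + t • u) u t := by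
        simpa using ((hasDerivAt_id t).smul_const u).const_add x₀
      have h1 : HasDerivAt (fun t : ℝ => Real.log (ν (x₀ + t • u))) (L (x₀ + t • u) u) t :=
        (by have := (hlog (x₀ + t • u)).hasFDerivAt.comp_hasDerivAt t hc; exact this)
      have h2 := ((hasDerivAt_pow 2 t).const_mul lam).div_const 4
      have h3 := (Real.hasDerivAt_log ht.ne').const_mul (d:ℝ)
      have hall := (h1.add h2).add h3
      refine (hall.congr_deriv ?_ : HasDerivAt ψ _ t)
      have : t ≠ 0 := ht.ne'
      rw [show (2:ℕ) - 1 = 1 from rfl, pow_one, Nat.cast_ofNat]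
      ring
    have hψanti : AntitoneOn ψ (Set.Ici R) := by
      apply antitoneOn_of_deriv_nonpos (convex_Ici R)
      · intro t ht
        exact ((hψderiv t (hR.trans_le ht)).continuousAt).continuousWithinAt
      · intro t ht
        rw [interior_Ici] at ht
        exact ((hψderiv t (hR.trans ht)).differentiableAt).differentiableWithinAt
      · intro t ht
        rw [interior_Ici] at ht
        have htR : R < t := ht
        have ht0 : 0 < t := hR.trans htR
        rw [(hψderiv t ht0).deriv]
        set xt : Euc d := x₀ + t • u with hxtdef
        have hxtnorm : ‖xt - x₀‖ = t := by rw [hcrv t, abs_of_pos ht0]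
        have hxtout : xt ∉ Metric.closedBall x₀ R := by
          rw [Metric.mem_closedBall, dist_eq_norm, hxtnorm]
          exact not_le.mpr htR
        have hd := hdrift xt
        rw [Set.indicator_of_notMem hxtout, hxtnorm] at hd
        have hsub : xt - x₀ = t • u := by rw [hxtdef]; abel
        have hLlin : L xt (xt - x₀) = t * L xt u := by
          rw [hsub]; simp
        rw [hLlin] at hd
        have h2γt : (0:ℝ) < 2*γ*t := by positivity
        have hexp : (L xt u + lam*t/2 + (d:ℝ)/t) * (2*γ*t)
            = 2*γ*(t * L xt u) + lam*γ*t^2 + 2*γ*(d:ℝ) := by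
          field_simp
        have hmul : (L xt u + lam*t/2 + (d:ℝ)/t) * (2*γ*t) ≤ -lam := by
          rw [hexp]; nlinarith [hd]
        by_contra hpos
        push_neg at hpos
        nlinarith [mul_pos hpos h2γt]
    have hRmem : R ∈ Set.Ici R := Set.self_mem_Ici
    have hrmem : r ∈ Set.Ici R := Set.mem_Ici.mpr hyr.le
    have hψle := hψanti hRmem hrmem hyr.le
    rw [hψdef] at hψle
    simp only [hcrvr] at hψle
    set z : Euc d := x₀ + R • u with hzdef
    have hzB : z ∈ Metric.closedBall x₀ R := by
      rw [Metric.mem_closedBall, dist_eq_norm, hcrv R, abs_of_pos hR]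
    have hlogmono : (d:ℝ) * Real.log R ≤ (d:ℝ) * Real.log r :=
      mul_le_mul_of_nonneg_left (Real.log_le_log hR hyr.le) (Nat.cast_nonneg d)
    have hlogy : Real.log (ν y) ≤ Real.log (ν z) + lam * R^2/4 - lam * r^2/4 := by
      linarith
    have hνy : ν y ≤ ν z * Real.exp (lam * R^2/4) * Real.exp (-(lam/4) * r^2) := by
      have := Real.exp_le_exp.mpr hlogy
      rw [Real.exp_log (hνpos y)] at this
      calc ν y ≤ Real.exp (Real.log (ν z) + lam * R^2/4 - lam*r^2/4) := this
        _ = ν z * Real.exp (lam * R^2/4) * Real.exp (-(lam/4) * r^2) := by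
            rw [sub_eq_add_neg, Real.exp_add, Real.exp_add, Real.exp_log (hνpos z)]
            ring_nf
    have hνz : ν z ≤ C * ν x := hratio z hzB x hx
    calc ν y ≤ ν z * Real.exp (lam * R^2/4) * Real.exp (-(lam/4) * r^2) := hνy
      _ ≤ C * ν x * Real.exp (lam * R^2/4) * Real.exp (-(lam/4) * r^2) := by
          exact mul_le_mul_of_nonneg_right
            (mul_le_mul_of_nonneg_right hνz (Real.exp_pos _).le) (Real.exp_pos _).le

lemma gauss_int_quad (x₀ : Euc d) {b : ℝ} (hb : 0 < b) :
    ∫ y : Euc d, Real.exp (-b * ‖y - x₀‖^2) = (Real.pi/b)^((d:ℝ)/2) := by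
  rw [show (∫ y : Euc d, Real.exp (-b * ‖y - x₀‖^2))
      = ∫ y : Euc d, (fun z : Euc d => Real.exp (-b * ‖z‖^2)) (y - x₀) from rfl,
    integral_sub_right_eq_self (fun z : Euc d => Real.exp (-b * ‖z‖^2)) x₀,
    GaussianFourier.integral_rexp_neg_mul_sq_norm hb, finrank_euclideanSpace_fin]

lemma gauss_integrable_quad (x₀ : Euc d) {b : ℝ} (hb : 0 < b) :
    Integrable (fun y : Euc d => Real.exp (-b * ‖y - x₀‖^2)) := by
  have h0 : Integrable (fun z : Euc d => Real.exp (-b * ‖z‖^2)) := by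
    by_contra hni
    have := integral_undef hni
    rw [GaussianFourier.integral_rexp_neg_mul_sq_norm hb] at this
    exact absurd this (ne_of_gt (Real.rpow_pos_of_pos (by positivity) _))
  exact h0.comp_sub_right x₀

lemma int_step_quad (ν : Euc d → ℝ) (hν1 : ∫ y, ν y = 1)
    (x₀ : Euc d) (lam K : ℝ) (hlam : 0 < lam)
    (hbd : ∀ y : Euc d, ν y ≤ K * Real.exp (-(lam/4) * ‖y - x₀‖^2)) :
    1 ≤ K * (4*Real.pi/lam)^((d:ℝ)/2) := by
  have hb : (0:ℝ) < lam/4 := by positivity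
  have hint : Integrable (fun y : Euc d => K * Real.exp (-(lam/4) * ‖y - x₀‖^2)) := by
    have := (gauss_integrable_quad x₀ hb).const_mul K
    simpa [neg_div] using this
  have hνint : Integrable ν := by
    by_contra hni
    rw [integral_undef hni] at hν1
    norm_num at hν1
  have hmono := integral_mono hνint hint hbd
  rw [hν1, MeasureTheory.integral_const_mul] at hmono
  have heq : ∫ y : Euc d, Real.exp (-(lam/4) * ‖y - x₀‖^2) = (4*Real.pi/lam)^((d:ℝ)/2) := by
    have hgi := gauss_int_quad x₀ hb
    rw [show Real.pi/(lam/4) = 4*Real.pi/lam by field_simp] at hgi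
    exact hgi
  rw [heq] at hmono
  exact hmono

end QuadLyapAux

/-- if a density has a quadratic Lyapunov function `V(x) = γ‖x−x₀‖² + 1`
on the ball `B(x₀,R)`, then the uniform density on the ball is dominated by
`a·ν` with `a = (C/V_d)·exp(λR²/4)·(4π/(λR²))^{d/2}`. -/

theorem quadratic_lyapunov_uniform_bound
    (d : ℕ) (hd : 1 ≤ d) (ν : Euc d → ℝ)
    (hν : IsDensity ν) (hνpos : ∀ x, 0 < ν x) (hνC1 : ContDiff ℝ 1 ν)
    (x₀ : Euc d) (γ lam h C R : ℝ) (hγ : 0 < γ) (hR : 0 < R)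
    (hLy : IsLyapunov ν (fun x => γ * ‖x - x₀‖ ^ 2 + 1) lam h (Metric.closedBall x₀ R) C) :
    ∀ x ∈ Metric.closedBall x₀ R,
      uball x₀ R x
        ≤ ((C / Vball d) * Real.exp (lam * R ^ 2 / 4) *
            (4 * Real.pi / (lam * R ^ 2)) ^ ((d : ℝ) / 2)) * ν x := by
  intro x hx
  have hlam := hLy.lam_pos
  have hC := hLy.C_pos
  have hdrift' := drift'_quad ν hνpos hνC1 x₀ γ lam h R hLy.drift
  have hkey := key_bound_quad ν hνpos hνC1 x₀ γ lam h C R hγ hR hlam hdrift' hLy.ratio x hx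
  set E : ℝ := Real.exp (lam * R^2/4) with hEdef
  have hE : 0 < E := Real.exp_pos _
  have hνx : 0 < ν x := hνpos x
  have h1le : 1 ≤ (C * ν x * E) * (4*Real.pi/lam)^((d:ℝ)/2) :=
    int_step_quad ν hν.2 x₀ lam (C * ν x * E) hlam hkey
  -- volume of the ball
  have hVd : 0 < Vball d :=
    ENNReal.toReal_pos (Metric.measure_closedBall_pos volume 0 one_pos).ne'
      measure_closedBall_lt_top.ne
  have hRd : (0:ℝ) < R ^ d := pow_pos hR d
  have hVB : (volume (Metric.closedBall x₀ R)).toReal = R ^ d * Vball d := by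
    rw [MeasureTheory.Measure.addHaar_closedBall' volume x₀ hR.le, ENNReal.toReal_mul,
      ENNReal.toReal_ofReal (by positivity), finrank_euclideanSpace_fin, Vball]
  have huball : uball x₀ R x = (R ^ d * Vball d)⁻¹ := by
    rw [uball, Set.indicator_of_mem hx, hVB]
  have hpow : (4*Real.pi/(lam*R^2))^((d:ℝ)/2) = (4*Real.pi/lam)^((d:ℝ)/2) / R^d := by
    rw [show 4*Real.pi/(lam*R^2) = (4*Real.pi/lam)/(R^2) by ring,
      Real.div_rpow (by positivity) (by positivity)]
    congr 1
    rw [← Real.rpow_natCast R 2, ← Real.rpow_mul hR.le,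
      show ((2:ℕ):ℝ)*((d:ℝ)/2) = (d:ℝ) by push_cast; ring, Real.rpow_natCast]
  have hG : 0 < (4*Real.pi/lam)^((d:ℝ)/2) :=
    Real.rpow_pos_of_pos (by positivity) _
  rw [huball, hpow]
  have hrhs : C / Vball d * E * ((4*Real.pi/lam)^((d:ℝ)/2) / R^d) * ν x
      = ((C * ν x * E) * (4*Real.pi/lam)^((d:ℝ)/2)) / (R^d * Vball d) := by
    field_simp
  rw [hrhs, inv_eq_one_div, div_le_div_iff₀ (by positivity) (by positivity)]
  nlinarith [mul_le_mul_of_nonneg_right h1le (mul_pos hRd hVd).le]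

end
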